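/- arXiv:quant-ph/0205033 — 2 statements merged into one kernel-verified Lean document; each statement's English description precedes it below -/
import Mathlib

section
/- Let ρ_A and ρ_B be density matrices on ℂ^n whose supports intersect trivially, i.e., the range of ρ_A and the range of ρ_B (as linear maps on ℂ^n) have intersection {0}. Then C(ρ_A, ρ_B) = 0. -/
open Matrix BigOperators
open scoped ComplexOrder

/-- A density matrix: positive semidefinite with trace 1. -/
def IsDensityMatrix {d : Type*} [Fintype d] [DecidableEq d]
    (ρ : Matrix d d ℂ) : Prop :=
  ρ.PosSemidef ∧ ρ.trace = 1

/-- The compatibility `C(ρA, ρB)`: the supremum, over all finite families of density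
matrices `σ` and weight vectors `p`, `q` (nonnegative, summing to 1) with
`∑ i, p i • σ i = ρA` and `∑ i, q i • σ i = ρB`, of the Bhattacharyya overlap
`∑ i, √(p i * q i)`. -/
noncomputable def compat {d : Type*} [Fintype d] [DecidableEq d]
    (ρA ρB : Matrix d d ℂ) : ℝ :=
  sSup { c : ℝ | ∃ (m : ℕ) (σ : Fin m → Matrix d d ℂ) (p q : Fin m → ℝ),
    (∀ i, IsDensityMatrix (σ i)) ∧ (∀ i, 0 ≤ p i) ∧ (∀ i, 0 ≤ q i) ∧
    ∑ i, p i = 1 ∧ ∑ i, q i = 1 ∧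
    ∑ i, p i • σ i = ρA ∧ ∑ i, q i • σ i = ρB ∧
    c = ∑ i, Real.sqrt (p i * q i) }

open scoped Classical in
/-- The positive semidefinite square root of a positive semidefinite matrix
(junk value `0` on non-PSD matrices). -/
noncomputable def psdSqrt {d : Type*} [Fintype d] [DecidableEq d]
    (A : Matrix d d ℂ) : Matrix d d ℂ :=
  if h : A.PosSemidef then
    (h.1.eigenvectorUnitary : Matrix d d ℂ) * diagonal ((↑) ∘ Real.sqrt ∘ h.1.eigenvalues) *
      (star h.1.eigenvectorUnitary : Matrix d d ℂ) else 0

/-- The fidelity `F(ρA, ρB) = Tr √(√ρA ρB √ρA)`. -/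
noncomputable def fidelity {d : Type*} [Fintype d] [DecidableEq d]
    (ρA ρB : Matrix d d ℂ) : ℝ :=
  (psdSqrt (psdSqrt ρA * ρB * psdSqrt ρA)).trace.re

/-- The pure-state density matrix `|ψ⟩⟨ψ|` associated to a vector `ψ`. -/
def pureState {d : Type*} [Fintype d] [DecidableEq d] (ψ : d → ℂ) : Matrix d d ℂ :=
  Matrix.vecMulVec ψ (star ψ)


-- factorization lemma
theorem exists_comp_of_ker_le_ker {K V W W₂ : Type*} [Field K]
    [AddCommGroup V] [Module K V] [AddCommGroup W] [Module K W]
    [AddCommGroup W₂] [Module K W₂]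
    (f : V →ₗ[K] W) (g : V →ₗ[K] W₂) (h : LinearMap.ker f ≤ LinearMap.ker g) :
    ∃ C : W →ₗ[K] W₂, g = C ∘ₗ f := by
  let φ : (V ⧸ LinearMap.ker f) →ₗ[K] W₂ := (LinearMap.ker f).liftQ g h
  let e := f.quotKerEquivRange
  let ψ : LinearMap.range f →ₗ[K] W₂ := φ ∘ₗ (e.symm : LinearMap.range f →ₗ[K] _)
  obtain ⟨C, hC⟩ := ψ.exists_extend
  refine ⟨C, ?_⟩
  ext x
  have h1 : (⟨f x, LinearMap.mem_range_self f x⟩ : LinearMap.range f)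
      = e (Submodule.Quotient.mk x) := rfl
  have h2 : C (f x) = ψ ⟨f x, LinearMap.mem_range_self f x⟩ := by
    have := congrArg (fun F => F ⟨f x, LinearMap.mem_range_self f x⟩) hC
    simpa using this
  simp [h2, ψ, h1, φ, e]

theorem range_le_range_of_herm {n : ℕ} {A B : Matrix (Fin n) (Fin n) ℂ}
    (hA : A.IsHermitian) (hB : B.IsHermitian)
    (h : LinearMap.ker (Matrix.toLin' A) ≤ LinearMap.ker (Matrix.toLin' B)) :
    LinearMap.range (Matrix.toLin' B) ≤ LinearMap.range (Matrix.toLin' A) := by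
  obtain ⟨C, hC⟩ := exists_comp_of_ker_le_ker (Matrix.toLin' A) (Matrix.toLin' B) h
  set M := LinearMap.toMatrix' C with hM
  have hBMA : B = M * A := by
    apply Matrix.toLin'.injective
    rw [Matrix.toLin'_mul, hC, hM, Matrix.toLin'_toMatrix']
  have hBAM : B = A * Mᴴ := by
    calc B = Bᴴ := hB.symm
    _ = (M * A)ᴴ := by rw [← hBMA]
    _ = Aᴴ * Mᴴ := by rw [Matrix.conjTranspose_mul]
    _ = A * Mᴴ := by rw [hA]
  rw [hBAM, Matrix.toLin'_mul]
  exact LinearMap.range_comp_le_range _ _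

open scoped ComplexOrder in
theorem ker_le_of_mem_mix {m n : ℕ} (σ : Fin m → Matrix (Fin n) (Fin n) ℂ) (p : Fin m → ℝ)
    (hσ : ∀ i, (σ i).PosSemidef) (hp : ∀ i, 0 ≤ p i) (j : Fin m) (hj : 0 < p j)
    (x : Fin n → ℂ) (hx : (∑ i, p i • σ i) *ᵥ x = 0) : σ j *ᵥ x = 0 := by
  have h0 : ∑ i, (p i : ℂ) * (star x ⬝ᵥ σ i *ᵥ x) = 0 := by
    have : star x ⬝ᵥ ((∑ i, p i • σ i) *ᵥ x) = 0 := by rw [hx, dotProduct_zero]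
    have hsum : (∑ i, p i • σ i) *ᵥ x = ∑ i, (p i • σ i) *ᵥ x := by
      rw [← Matrix.toLin'_apply, map_sum, LinearMap.sum_apply]
      simp [Matrix.toLin'_apply]
    have hdot : star x ⬝ᵥ (∑ i, (p i • σ i) *ᵥ x) = ∑ i, star x ⬝ᵥ ((p i • σ i) *ᵥ x) := by
      simp only [dotProduct, Finset.sum_apply, Finset.mul_sum]
      exact Finset.sum_comm
    rw [← this, hsum, hdot]
    refine Finset.sum_congr rfl fun i _ => ?_
    rw [Matrix.smul_mulVec, dotProduct_smul, Complex.real_smul]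
  have hterm : ∀ i ∈ Finset.univ, 0 ≤ (p i : ℂ) * (star x ⬝ᵥ σ i *ᵥ x) := by
    intro i _
    exact mul_nonneg (by exact_mod_cast Complex.zero_le_real.mpr (hp i)) ((hσ i).dotProduct_mulVec_nonneg x)
  have hzero := (Finset.sum_eq_zero_iff_of_nonneg hterm).mp h0 j (Finset.mem_univ j)
  have hpj : (p j : ℂ) ≠ 0 := by exact_mod_cast hj.ne'
  have : star x ⬝ᵥ σ j *ᵥ x = 0 := by
    rcases mul_eq_zero.mp hzero with h | h
    · exact absurd h hpj
    · exact h
  exact ((hσ j).dotProduct_mulVec_zero_iff x).mp this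

/-- **Theorem 1(2).** Incompatible states (states whose supports intersect
trivially) have compatibility `0`. -/
theorem compat_eq_zero_of_disjoint_supports {n : ℕ}
    (ρA ρB : Matrix (Fin n) (Fin n) ℂ)
    (hA : IsDensityMatrix ρA) (hB : IsDensityMatrix ρB)
    (hdisj : LinearMap.range (Matrix.toLin' ρA) ⊓ LinearMap.range (Matrix.toLin' ρB) = ⊥) :
    compat ρA ρB = 0 := by
  have hsub : { c : ℝ | ∃ (m : ℕ) (σ : Fin m → Matrix (Fin n) (Fin n) ℂ) (p q : Fin m → ℝ),
      (∀ i, IsDensityMatrix (σ i)) ∧ (∀ i, 0 ≤ p i) ∧ (∀ i, 0 ≤ q i) ∧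
      ∑ i, p i = 1 ∧ ∑ i, q i = 1 ∧
      ∑ i, p i • σ i = ρA ∧ ∑ i, q i • σ i = ρB ∧
      c = ∑ i, Real.sqrt (p i * q i) } ⊆ {0} := by
    rintro c ⟨m, σ, p, q, hσ, hp, hq, hp1, hq1, hpA, hqB, rfl⟩
    have key : ∀ i, p i * q i = 0 := by
      intro i
      by_contra hne
      obtain ⟨hpne, hqne⟩ := mul_ne_zero_iff.mp hne
      have hpi : 0 < p i := (hp i).lt_of_ne (Ne.symm hpne)
      have hqi : 0 < q i := (hq i).lt_of_ne (Ne.symm hqne)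
      have hkA : LinearMap.ker (Matrix.toLin' ρA) ≤ LinearMap.ker (Matrix.toLin' (σ i)) := by
        intro x hx
        rw [LinearMap.mem_ker, Matrix.toLin'_apply] at hx ⊢
        exact ker_le_of_mem_mix σ p (fun k => (hσ k).1) hp i hpi x (by rw [hpA]; exact hx)
      have hkB : LinearMap.ker (Matrix.toLin' ρB) ≤ LinearMap.ker (Matrix.toLin' (σ i)) := by
        intro x hx
        rw [LinearMap.mem_ker, Matrix.toLin'_apply] at hx ⊢
        exact ker_le_of_mem_mix σ q (fun k => (hσ k).1) hq i hqi x (by rw [hqB]; exact hx)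
      have hrA := range_le_range_of_herm hA.1.1 (hσ i).1.1 hkA
      have hrB := range_le_range_of_herm hB.1.1 (hσ i).1.1 hkB
      have hbot : LinearMap.range (Matrix.toLin' (σ i)) = ⊥ :=
        le_bot_iff.mp (hdisj ▸ le_inf hrA hrB)
      have hσ0 : σ i = 0 := by
        have := LinearMap.range_eq_bot.mp hbot
        have h0 : Matrix.toLin' (σ i) = Matrix.toLin' (0 : Matrix (Fin n) (Fin n) ℂ) := by
          rw [this, map_zero]
        exact Matrix.toLin'.injective h0
      have := (hσ i).2
      rw [hσ0] at this
      simp at this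
    simp only [Set.mem_singleton_iff]
    refine Finset.sum_eq_zero fun i _ => ?_
    rw [key i, Real.sqrt_zero]
  rcases Set.subset_singleton_iff_eq.mp hsub with h | h
  · rw [compat, h, Real.sSup_empty]
  · rw [compat, h, csSup_singleton]
end

section
/- Let P and Q be n×n complex matrices that are orthogonal projections (Hermitian and idempotent), and suppose they have no common nonzero fixed vector, i.e., the intersection of the range of P and the range of Q is {0}. Then Tr[(PQ)^n] → 0 as n → ∞. -/
open Matrix BigOperators
open scoped ComplexOrder

namespace TraceProjAux

variable {n : ℕ}

/-- squared Euclidean norm via dot product -/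
noncomputable def nm (w : Fin n → ℂ) : ℝ := (star w ⬝ᵥ w).re

lemma nm_eq_sum (w : Fin n → ℂ) : nm w = ∑ i, Complex.normSq (w i) := by
  simp [nm, dotProduct, Complex.normSq_eq_conj_mul_self, Pi.star_apply, Complex.normSq_apply]

lemma nm_nonneg (w : Fin n → ℂ) : 0 ≤ nm w := by
  rw [nm_eq_sum]; exact Finset.sum_nonneg fun i _ => Complex.normSq_nonneg _

lemma nm_eq_zero {w : Fin n → ℂ} (h : nm w = 0) : w = 0 := by
  rw [nm_eq_sum] at h
  funext i
  have := (Finset.sum_eq_zero_iff_of_nonneg (fun i _ => Complex.normSq_nonneg (w i))).1 h i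
    (Finset.mem_univ i)
  exact Complex.normSq_eq_zero.1 this

lemma proj_cross (R : Matrix (Fin n) (Fin n) ℂ) (hR2 : R * R = R)
    (w : Fin n → ℂ) : R *ᵥ (w - R *ᵥ w) = 0 := by
  rw [Matrix.mulVec_sub, Matrix.mulVec_mulVec, hR2, sub_self]

lemma nm_pythagoras (R : Matrix (Fin n) (Fin n) ℂ) (hR : R.IsHermitian) (hR2 : R * R = R)
    (w : Fin n → ℂ) : nm (R *ᵥ w) + nm (w - R *ᵥ w) = nm w := by
  set u := R *ᵥ w with hu
  set d := w - u with hd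
  have hRd : R *ᵥ d = 0 := proj_cross R hR2 w
  have hcross1 : star u ⬝ᵥ d = 0 := by
    rw [hu, Matrix.star_mulVec, ← Matrix.dotProduct_mulVec, hR.eq, hRd, dotProduct_zero]
  have hcross2 : star d ⬝ᵥ u = 0 := by
    have h1 : star d ᵥ* R = star (R *ᵥ d) := by
      rw [Matrix.star_mulVec, hR.eq]
    rw [hu, Matrix.dotProduct_mulVec, h1, hRd]
    simp
  have hw : w = u + d := by rw [hd]; abel
  have hkey : star w ⬝ᵥ w = star u ⬝ᵥ u + star d ⬝ᵥ d := by
    conv_lhs => rw [hw]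
    simp [star_add, add_dotProduct, dotProduct_add, hcross1, hcross2]
  unfold nm
  rw [hkey, Complex.add_re]

lemma nm_proj_le (R : Matrix (Fin n) (Fin n) ℂ) (hR : R.IsHermitian) (hR2 : R * R = R)
    (w : Fin n → ℂ) : nm (R *ᵥ w) ≤ nm w := by
  have := nm_pythagoras R hR hR2 w
  have := nm_nonneg (w - R *ᵥ w)
  linarith

lemma nm_proj_eq (R : Matrix (Fin n) (Fin n) ℂ) (hR : R.IsHermitian) (hR2 : R * R = R)
    (w : Fin n → ℂ) (h : nm (R *ᵥ w) = nm w) : R *ᵥ w = w := by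
  have hp := nm_pythagoras R hR hR2 w
  have hz : nm (w - R *ᵥ w) = 0 := by linarith
  have := nm_eq_zero hz
  exact (sub_eq_zero.mp this).symm

end TraceProjAux

open TraceProjAux in
/-- If `P` and `Q` are orthogonal projections whose ranges intersect trivially,
then `Tr[(PQ)^n] → 0` as `n → ∞`. -/
theorem trace_pow_proj_mul_proj_tendsto_zero {n : ℕ}
    (P Q : Matrix (Fin n) (Fin n) ℂ)
    (hP : P.IsHermitian) (hP2 : P * P = P)
    (hQ : Q.IsHermitian) (hQ2 : Q * Q = Q)
    (hdisj : LinearMap.range (Matrix.toLin' P) ⊓ LinearMap.range (Matrix.toLin' Q) = ⊥) :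
    Filter.Tendsto (fun k : ℕ => ((P * Q) ^ k).trace) Filter.atTop (nhds 0) := by
  set A := P * Q * P with hAdef
  have hA : A.IsHermitian := by
    show Aᴴ = A
    rw [hAdef, Matrix.conjTranspose_mul, Matrix.conjTranspose_mul, hP.eq, hQ.eq, mul_assoc]
  -- eigenvalues of A are in [0, 1)
  set lam := hA.eigenvalues with hlam
  have heig : ∀ i, 0 ≤ lam i ∧ lam i < 1 := by
    intro i
    set v : Fin n → ℂ := ⇑(hA.eigenvectorBasis i) with hv
    have hvne : v ≠ 0 := by
      intro h
      have h0 : hA.eigenvectorBasis i = 0 := by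
        ext j; exact congrFun h j
      exact hA.eigenvectorBasis.orthonormal.ne_zero i h0
    have hnmv : 0 < nm v := by
      rcases lt_or_eq_of_le (nm_nonneg v) with h | h
      · exact h
      · exact absurd (nm_eq_zero h.symm) hvne
    have hAv : A *ᵥ v = (lam i : ℂ) • v := by
      have := hA.mulVec_eigenvectorBasis i
      rw [← hv] at this
      rw [this]
      funext j
      simp [Complex.real_smul, hlam]
    set u := P *ᵥ v with hu
    set t := Q *ᵥ u with ht
    have hkey : nm t = lam i * nm v := by
      have h1 : star t ⬝ᵥ t = star v ⬝ᵥ (A *ᵥ v) := by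
        rw [ht, Matrix.star_mulVec, ← Matrix.dotProduct_mulVec, hQ.eq,
          Matrix.mulVec_mulVec, hQ2, hu, Matrix.star_mulVec, ← Matrix.dotProduct_mulVec,
          hP.eq, Matrix.mulVec_mulVec, Matrix.mulVec_mulVec, hAdef, mul_assoc]
      have h2 : star v ⬝ᵥ (A *ᵥ v) = (lam i : ℂ) * (star v ⬝ᵥ v) := by
        rw [hAv, dotProduct_smul, smul_eq_mul]
      show (star t ⬝ᵥ t).re = lam i * (star v ⬝ᵥ v).re
      rw [h1, h2]
      simp [Complex.re_ofReal_mul]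
    refine ⟨?_, ?_⟩
    · have := nm_nonneg t
      nlinarith
    · by_contra hge
      push_neg at hge
      have hchain1 : nm t ≤ nm u := nm_proj_le Q hQ hQ2 u
      have hchain2 : nm u ≤ nm v := nm_proj_le P hP hP2 v
      have hge' : nm v ≤ nm t := by nlinarith
      have he1 : nm u = nm v := le_antisymm hchain2 (le_trans hge' hchain1)
      have he2 : nm t = nm u := by linarith
      have hPv : P *ᵥ v = v := nm_proj_eq P hP hP2 v he1
      have hQv : Q *ᵥ v = v := by
        have h3 := nm_proj_eq Q hQ hQ2 u he2
        rw [hu, hPv] at h3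
        exact h3
      have hmem : v ∈ LinearMap.range (Matrix.toLin' P) ⊓ LinearMap.range (Matrix.toLin' Q) := by
        constructor
        · exact ⟨v, by rw [Matrix.toLin'_apply]; exact hPv⟩
        · exact ⟨v, by rw [Matrix.toLin'_apply]; exact hQv⟩
      rw [hdisj] at hmem
      exact hvne hmem
  -- trace of A^k is the sum of k-th powers of eigenvalues
  set U : Matrix (Fin n) (Fin n) ℂ := (hA.eigenvectorUnitary : Matrix (Fin n) (Fin n) ℂ) with hU
  have hU1 : star U * U = 1 := by
    rw [hU]
    exact (Matrix.mem_unitaryGroup_iff'.mp hA.eigenvectorUnitary.2)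
  have hU2 : U * star U = 1 := by
    rw [hU]
    exact (Matrix.mem_unitaryGroup_iff.mp hA.eigenvectorUnitary.2)
  set D : Matrix (Fin n) (Fin n) ℂ := Matrix.diagonal (RCLike.ofReal ∘ lam) with hD
  have hspec : A = U * D * star U := hA.spectral_theorem
  have hAk : ∀ k : ℕ, A ^ k = U * D ^ k * star U := by
    intro k
    induction k with
    | zero => simp [pow_zero, mul_one, hU2]
    | succ m ih =>
      rw [pow_succ, ih, hspec, pow_succ]
      calc U * D ^ m * star U * (U * D * star U)
          = U * D ^ m * (star U * U) * D * star U := by simp only [mul_assoc]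
        _ = U * (D ^ m * D) * star U := by rw [hU1]; simp only [mul_one, mul_assoc]
  have htraceA : ∀ k : ℕ, (A ^ k).trace = ∑ i, ((lam i : ℂ)) ^ k := by
    intro k
    rw [hAk k, Matrix.trace_mul_cycle, hU1, one_mul, hD,
      Matrix.diagonal_pow, Matrix.trace_diagonal]
    simp
  -- trace of (PQ)^k equals trace of A^k for k ≥ 1
  have hAkP : ∀ m : ℕ, A ^ (m + 1) = (P * Q) ^ (m + 1) * P := by
    intro m
    induction m with
    | zero => rw [pow_one, pow_one, hAdef]
    | succ m ih =>
      rw [pow_succ, ih, hAdef, pow_succ]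
      calc (P * Q) ^ (m + 1) * P * (P * Q * P)
          = (P * Q) ^ (m + 1) * ((P * P) * Q * P) := by simp only [mul_assoc]
        _ = (P * Q) ^ (m + 1) * (P * Q) * P := by rw [hP2]; simp only [mul_assoc]
  have htr : ∀ m : ℕ, ((P * Q) ^ (m + 1)).trace = (A ^ (m + 1)).trace := by
    intro m
    rw [hAkP m, Matrix.trace_mul_comm]
    congr 1
    rw [pow_succ']
    symm
    calc P * (P * Q * (P * Q) ^ m) = (P * P) * Q * (P * Q) ^ m := by simp only [mul_assoc]
      _ = P * Q * (P * Q) ^ m := by rw [hP2]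
  -- the limit
  have hlim : Filter.Tendsto (fun k : ℕ => ∑ i, ((lam i : ℂ)) ^ k) Filter.atTop (nhds 0) := by
    have : Filter.Tendsto (fun k : ℕ => ∑ i : Fin n, ((lam i : ℂ)) ^ k) Filter.atTop
        (nhds (∑ i : Fin n, (0 : ℂ))) := by
      apply tendsto_finset_sum
      intro i _
      apply tendsto_pow_atTop_nhds_zero_of_norm_lt_one
      rw [Complex.norm_real, Real.norm_eq_abs, abs_of_nonneg (heig i).1]
      exact (heig i).2
    simpa using this
  have heq : ∀ᶠ k in Filter.atTop, ∑ i, ((lam i : ℂ)) ^ k = ((P * Q) ^ k).trace := by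
    filter_upwards [Filter.eventually_ge_atTop 1] with k hk
    obtain ⟨m, rfl⟩ := Nat.exists_eq_add_of_le hk
    have hmm : 1 + m = m + 1 := by omega
    rw [hmm, htr, htraceA]
  exact hlim.congr' heq
end
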